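/- arXiv:2408.15487 — 2 statements merged into one kernel-verified Lean document; each statement's English description precedes it below -/
import Mathlib

section
/- Let r, k, n be positive integers with 2k ≥ r+4 and n ≥ 20(r+2)²k, and let G be a C_{2k+1}-free graph on n vertices with e(G) ≥ ⌊(n−r+1)²/4⌋ + C(r,2). Then for every path P in G of even order at most 2k with endpoints x and y, the set (N(x) ∩ N(y)) \ V(P) has at most 8k elements. -/
/-- `G` contains no cycle with `ℓ` vertices, i.e. `G` is `C_ℓ`-free. -/
def CycleFree {V : Type*} (ℓ : ℕ) (G : SimpleGraph V) : Prop :=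
  ∀ (v : V) (c : G.Walk v v), c.IsCycle → c.length ≠ ℓ

namespace CommonNbrsAux

open SimpleGraph Finset

set_option linter.unusedSectionVars false
set_option maxHeartbeats 2000000

variable {V : Type*} [Fintype V] [DecidableEq V] {G : SimpleGraph V} [DecidableRel G.Adj]

/-! ### Walk helpers -/

lemma isPath_concat {x y w : V} {p : G.Walk x y} (hp : p.IsPath) (h : G.Adj y w)
    (hw : w ∉ p.support) : (p.concat h).IsPath := by
  rw [← Walk.isPath_reverse_iff, Walk.reverse_concat]
  apply Walk.IsPath.cons
  · rwa [Walk.isPath_reverse_iff]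
  · rw [Walk.support_reverse, List.mem_reverse]; exact hw

lemma pair_card_le (a b : V) : ({a, b} : Finset V).card ≤ 2 := by
  refine le_trans (Finset.card_insert_le _ _) ?_
  simp

/-- From an even-order path plus a common neighbour of the endpoints we obtain a cycle
of length two more than the path. -/
lemma cycle_of_common_nbr {x y w : V}
    (P : G.Walk x y) (hP : P.IsPath) (hpos : 0 < P.length)
    (hxw : G.Adj x w) (hyw : G.Adj y w) (hwP : w ∉ P.support) :
    ∃ (c : G.Walk w w), c.IsCycle ∧ c.length = P.length + 2 := by
  have hQ : (P.concat hyw).IsPath := isPath_concat hP hyw hwP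
  refine ⟨Walk.cons hxw.symm (P.concat hyw), ?_, ?_⟩
  · rw [Walk.cons_isCycle_iff]
    refine ⟨hQ, ?_⟩
    rw [Walk.edges_concat, List.concat_eq_append, List.mem_append]
    rintro (h | h)
    · exact hwP (P.fst_mem_support_of_mem_edges h)
    · simp only [List.mem_singleton, Sym2.eq, Sym2.rel_iff', Prod.mk.injEq,
        Prod.swap_prod_mk] at h
      rcases h with ⟨h1, h2⟩ | ⟨h1, h2⟩
      · exact hwP (h1 ▸ P.end_mem_support)
      · exfalso; subst h2
        rw [Walk.isPath_iff_eq_nil] at hP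
        subst hP; simp at hpos
  · simp [Walk.length_concat]

/-! ### Degree counting -/

/-- degree of `v` into the finset `A` -/
def dS (G : SimpleGraph V) [DecidableRel G.Adj] (A : Finset V) (v : V) : ℕ :=
  (A.filter (fun u => G.Adj v u)).card

/-- sum of internal degrees (= twice the number of edges inside `A`) -/
def SS (G : SimpleGraph V) [DecidableRel G.Adj] (A : Finset V) : ℕ :=
  ∑ v ∈ A, dS G A v

/-- codegree (number of common neighbours) -/
def cod (G : SimpleGraph V) [DecidableRel G.Adj] (u v : V) : ℕ :=
  (Finset.univ.filter (fun w => G.Adj u w ∧ G.Adj v w)).card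

lemma dS_eq_sum (A : Finset V) (v : V) :
    dS G A v = ∑ u ∈ A, (if G.Adj v u then 1 else 0) := Finset.card_filter _ _

lemma dS_mono {A B : Finset V} (h : A ⊆ B) (v : V) : dS G A v ≤ dS G B v :=
  Finset.card_le_card (Finset.filter_subset_filter _ h)

lemma dS_lt_card {A : Finset V} {v : V} (hv : v ∈ A) : dS G A v ≤ A.card - 1 := by
  have hsub : A.filter (fun u => G.Adj v u) ⊆ A.erase v := by
    intro u hu
    rw [Finset.mem_filter] at hu
    exact Finset.mem_erase.mpr ⟨fun h => (G.ne_of_adj hu.2 h.symm), hu.1⟩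
  have := Finset.card_le_card hsub
  rw [Finset.card_erase_of_mem hv] at this
  exact this

lemma SS_erase {A : Finset V} {v0 : V} (hv0 : v0 ∈ A) :
    SS G A = SS G (A.erase v0) + 2 * dS G A v0 := by
  have hsum : ∀ (v : V), dS G A v
      = (if G.Adj v v0 then 1 else 0) + dS G (A.erase v0) v := by
    intro v
    rw [dS_eq_sum, dS_eq_sum, ← Finset.add_sum_erase _ _ hv0]
  have hdv0 : dS G (A.erase v0) v0 = dS G A v0 := by
    rw [dS_eq_sum, dS_eq_sum, ← Finset.add_sum_erase _ _ hv0, if_neg (G.irrefl), zero_add]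
  have hswap : ∑ v ∈ A.erase v0, (if G.Adj v v0 then 1 else 0) = dS G A v0 := by
    rw [← hdv0, dS_eq_sum]
    apply Finset.sum_congr rfl
    intro u _
    simp only [G.adj_comm v0 u]
  unfold SS
  rw [← Finset.add_sum_erase _ _ hv0]
  rw [Finset.sum_congr rfl (fun v _ => hsum v), Finset.sum_add_distrib, hswap, hsum v0,
    if_neg (G.irrefl), zero_add, hdv0]
  ring

lemma SS_sdiff (s : Finset V) :
    SS G Finset.univ ≤ SS G (Finset.univ \ s) + 2 * ∑ w ∈ s, dS G Finset.univ w := by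
  induction s using Finset.induction_on with
  | empty => simp
  | @insert a s ha ih =>
    have hmem : a ∈ Finset.univ \ s := by
      rw [Finset.mem_sdiff]; exact ⟨Finset.mem_univ a, ha⟩
    have hsd : Finset.univ \ insert a s = (Finset.univ \ s).erase a := by
      ext v
      simp only [Finset.mem_sdiff, Finset.mem_univ, true_and, Finset.mem_insert,
        Finset.mem_erase]
      tauto
    have he := SS_erase (G := G) hmem
    have hd : dS G (Finset.univ \ s) a ≤ dS G Finset.univ a :=
      dS_mono (Finset.sdiff_subset) a
    rw [Finset.sum_insert ha, hsd]
    omega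

lemma SS_univ_eq : SS G Finset.univ = 2 * G.edgeFinset.card := by
  unfold SS
  rw [← SimpleGraph.sum_degrees_eq_twice_card_edges]
  apply Finset.sum_congr rfl
  intro v _
  rw [SimpleGraph.degree, SimpleGraph.neighborFinset_eq_filter]
  rfl

lemma edge_ncard_eq : (G.edgeSet).ncard = G.edgeFinset.card := by
  rw [Set.ncard_eq_toFinset_card']
  exact congrArg Finset.card (by ext e; simp)

lemma cod_self (w : V) : cod G w w = dS G Finset.univ w := by
  unfold cod dS
  congr 1
  ext u
  simp [G.adj_comm]

lemma sum_dS_sq (W : Finset V) :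
    ∑ v : V, (dS G W v) ^ 2 = ∑ w1 ∈ W, ∑ w2 ∈ W, cod G w1 w2 := by
  have h1 : ∀ v : V, (dS G W v) ^ 2
      = ∑ w1 ∈ W, ∑ w2 ∈ W, (if G.Adj w1 v ∧ G.Adj w2 v then 1 else 0) := by
    intro v
    rw [sq, dS_eq_sum]
    rw [Finset.sum_mul_sum]
    apply Finset.sum_congr rfl
    intro w1 _
    apply Finset.sum_congr rfl
    intro w2 _
    have e1 : G.Adj w1 v ↔ G.Adj v w1 := G.adj_comm _ _
    have e2 : G.Adj w2 v ↔ G.Adj v w2 := G.adj_comm _ _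
    simp only [e1, e2]
    by_cases h1 : G.Adj v w1 <;> by_cases h2 : G.Adj v w2 <;> simp [h1, h2]
  calc ∑ v : V, (dS G W v) ^ 2
      = ∑ v : V, ∑ w1 ∈ W, ∑ w2 ∈ W, (if G.Adj w1 v ∧ G.Adj w2 v then 1 else 0) :=
        Finset.sum_congr rfl (fun v _ => h1 v)
    _ = ∑ w1 ∈ W, ∑ v : V, ∑ w2 ∈ W, (if G.Adj w1 v ∧ G.Adj w2 v then 1 else 0) :=
        Finset.sum_comm
    _ = ∑ w1 ∈ W, ∑ w2 ∈ W, ∑ v : V, (if G.Adj w1 v ∧ G.Adj w2 v then 1 else 0) :=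
        Finset.sum_congr rfl (fun w1 _ => Finset.sum_comm)
    _ = ∑ w1 ∈ W, ∑ w2 ∈ W, cod G w1 w2 := by
        apply Finset.sum_congr rfl
        intro w1 _
        apply Finset.sum_congr rfl
        intro w2 _
        rw [cod, Finset.card_filter]

lemma sum_dS_sq_le {W : Finset V} {Q : ℕ}
    (hQ : ∀ w1 ∈ W, ∀ w2 ∈ W, w1 ≠ w2 → cod G w1 w2 ≤ Q) :
    ∑ v : V, (dS G W v) ^ 2 ≤ (∑ w ∈ W, dS G Finset.univ w) + Q * W.card * W.card := by
  rw [sum_dS_sq]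
  have hsplit : ∀ w1 ∈ W, ∑ w2 ∈ W, cod G w1 w2
      ≤ dS G Finset.univ w1 + Q * W.card := by
    intro w1 hw1
    rw [← Finset.add_sum_erase _ _ hw1, cod_self]
    have : ∑ w2 ∈ W.erase w1, cod G w1 w2 ≤ Q * W.card := by
      calc ∑ w2 ∈ W.erase w1, cod G w1 w2 ≤ ∑ _w2 ∈ W.erase w1, Q := by
            apply Finset.sum_le_sum
            intro w2 hw2
            rw [Finset.mem_erase] at hw2
            exact hQ w1 hw1 w2 hw2.2 (Ne.symm hw2.1)
        _ = (W.erase w1).card * Q := by rw [Finset.sum_const, smul_eq_mul]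
        _ ≤ W.card * Q := Nat.mul_le_mul_right _ (Finset.card_le_card (Finset.erase_subset _ _))
        _ = Q * W.card := Nat.mul_comm _ _
    omega
  calc ∑ w1 ∈ W, ∑ w2 ∈ W, cod G w1 w2
      ≤ ∑ w1 ∈ W, (dS G Finset.univ w1 + Q * W.card) := Finset.sum_le_sum hsplit
    _ = (∑ w ∈ W, dS G Finset.univ w) + W.card * (Q * W.card) := by
        rw [Finset.sum_add_distrib, Finset.sum_const, smul_eq_mul]
    _ = (∑ w ∈ W, dS G Finset.univ w) + Q * W.card * W.card := by ring

lemma sum_deg_swap (W : Finset V) :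
    ∑ v : V, dS G W v = ∑ w ∈ W, dS G Finset.univ w := by
  have h : ∀ (s t : Finset V), ∑ v ∈ s, dS G t v = ∑ w ∈ t, dS G s w := by
    intro s t
    simp_rw [dS_eq_sum]
    rw [Finset.sum_comm]
    apply Finset.sum_congr rfl
    intro w _
    apply Finset.sum_congr rfl
    intro v _
    simp [G.adj_comm]
  exact h Finset.univ W

lemma deg_sum_sq_bound {W : Finset V} {Q : ℕ}
    (hQ : ∀ w1 ∈ W, ∀ w2 ∈ W, w1 ≠ w2 → cod G w1 w2 ≤ Q) :
    (∑ w ∈ W, dS G Finset.univ w) ^ 2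
      ≤ (Fintype.card V) * ((∑ w ∈ W, dS G Finset.univ w) + Q * W.card * W.card) := by
  have hcs := sq_sum_le_card_mul_sum_sq (s := (Finset.univ : Finset V))
    (f := fun v => dS G W v)
  rw [sum_deg_swap] at hcs
  calc (∑ w ∈ W, dS G Finset.univ w) ^ 2
      ≤ Finset.univ.card * ∑ v : V, (dS G W v) ^ 2 := hcs
    _ ≤ Finset.univ.card * ((∑ w ∈ W, dS G Finset.univ w) + Q * W.card * W.card) :=
        Nat.mul_le_mul_left _ (sum_dS_sq_le hQ)
    _ = (Fintype.card V) * ((∑ w ∈ W, dS G Finset.univ w) + Q * W.card * W.card) := by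
        rw [Finset.card_univ]

/-! ### The cleaning lemma -/

lemma cleaning (k : ℕ) :
    ∀ (N : ℕ) (A : Finset V), A.card = N →
    A.card ^ 2 + (4 * k + 4) * A.card ≤ 2 * SS G A → A.Nonempty →
    ∃ B ⊆ A, B.Nonempty ∧ ∀ v ∈ B, B.card + 2 * k + 2 ≤ 2 * dS G B v := by
  intro N
  induction N using Nat.strong_induction_on with
  | _ N ih =>
    intro A hcard hinv hne
    by_cases hgood : ∀ v ∈ A, A.card + 2 * k + 2 ≤ 2 * dS G A v
    · exact ⟨A, Finset.Subset.refl A, hne, hgood⟩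
    · push_neg at hgood
      obtain ⟨v0, hv0A, hv0bad⟩ := hgood
      have hAbig : 4 * k + 6 ≤ A.card := by
        have hSS : SS G A ≤ A.card * (A.card - 1) := by
          unfold SS
          calc ∑ v ∈ A, dS G A v ≤ ∑ _v ∈ A, (A.card - 1) :=
                Finset.sum_le_sum (fun v hv => dS_lt_card hv)
            _ = A.card * (A.card - 1) := by rw [Finset.sum_const, smul_eq_mul]
        have hpos : 1 ≤ A.card := Finset.card_pos.mpr hne
        have h3 : A.card * (A.card - 1) + A.card = A.card ^ 2 := by
          obtain ⟨c, hc⟩ := Nat.exists_eq_add_of_le hpos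
          rw [hc]
          simp only [Nat.add_sub_cancel_left]
          ring
        by_contra hcon
        push_neg at hcon
        have h5 : A.card * A.card ≤ A.card * (4 * k + 5) :=
          Nat.mul_le_mul_left _ (by omega)
        nlinarith [hinv, hSS, h3, hpos, h5]
      set A' := A.erase v0 with hA'
      have hcard' : A'.card = N - 1 := by
        rw [hA', Finset.card_erase_of_mem hv0A, hcard]
      have hne' : A'.Nonempty := by
        rw [← Finset.card_pos, hcard']
        omega
      have hinv' : A'.card ^ 2 + (4 * k + 4) * A'.card ≤ 2 * SS G A' := by
        have hSSe := SS_erase (G := G) hv0A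
        have hcc : A'.card = A.card - 1 := by rw [hA', Finset.card_erase_of_mem hv0A]
        have h2d : 2 * dS G A v0 ≤ A.card + 2 * k + 1 := by omega
        have hc1 : 1 ≤ A.card := Finset.card_pos.mpr hne
        have hkey : (A.card - 1) ^ 2 + (4 * k + 4) * (A.card - 1) + (2 * A.card + 4 * k + 3)
            = A.card ^ 2 + (4 * k + 4) * A.card := by
          obtain ⟨c, hc⟩ := Nat.exists_eq_add_of_le hc1
          rw [hc]
          simp only [Nat.add_sub_cancel_left]
          ring
        rw [hcc]
        linarith [hkey, hinv, hSSe, h2d]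
      have hlt : N - 1 < N := by
        have : 1 ≤ A.card := Finset.card_pos.mpr hne
        omega
      obtain ⟨B, hBA', hBne, hBgood⟩ := ih (N - 1) hlt A' hcard' hinv' hne'
      exact ⟨B, hBA'.trans (Finset.erase_subset _ _), hBne, hBgood⟩

lemma codegree_of_min_degree {k : ℕ} {B : Finset V}
    (hdeg : ∀ v ∈ B, B.card + 2 * k + 2 ≤ 2 * dS G B v) :
    ∀ u v, u ∈ B → v ∈ B → u ≠ v →
      2 * k + 2 ≤ (B.filter (fun w => G.Adj u w ∧ G.Adj v w)).card := by
  intro u v hu hv huv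
  have h1 := hdeg u hu
  have h2 := hdeg v hv
  have hfilter : B.filter (fun w => G.Adj u w ∧ G.Adj v w)
      = (B.filter (fun w => G.Adj u w)) ∩ (B.filter (fun w => G.Adj v w)) := by
    ext w; simp only [Finset.mem_filter, Finset.mem_inter]; tauto
  have hunion : ((B.filter (fun w => G.Adj u w)) ∪ (B.filter (fun w => G.Adj v w))).card
      ≤ B.card := by
    apply Finset.card_le_card
    intro w hw
    rw [Finset.mem_union] at hw
    rcases hw with hw | hw <;> exact (Finset.mem_filter.mp hw).1
  have hie := Finset.card_inter_add_card_union
    (B.filter (fun w => G.Adj u w)) (B.filter (fun w => G.Adj v w))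
  unfold dS at h1 h2
  rw [hfilter]
  omega

lemma exists_small_subset {α : Type*} [DecidableEq α] (f : α → ℕ) :
    ∀ (s : Finset α) (m : ℕ), m ≤ s.card →
    ∃ u ⊆ s, u.card = m ∧ s.card * (∑ a ∈ u, f a) ≤ m * (∑ a ∈ s, f a) := by
  intro s
  induction s using Finset.strongInduction with
  | _ s ihs =>
    intro m hm
    rcases eq_or_lt_of_le hm with heq | hlt
    · exact ⟨s, Finset.Subset.refl s, heq.symm, by rw [heq]⟩
    · have hne : s.Nonempty := by
        rw [← Finset.card_pos]; omega
      obtain ⟨a, has, hamax⟩ := Finset.exists_max_image s f hne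
      have hssub : s.erase a ⊂ s := Finset.erase_ssubset has
      have hcard : (s.erase a).card = s.card - 1 := Finset.card_erase_of_mem has
      obtain ⟨u, hus, hucard, husum⟩ := ihs (s.erase a) hssub m (by omega)
      refine ⟨u, hus.trans (Finset.erase_subset _ _), hucard, ?_⟩
      have hval : ∀ b ∈ u, f b ≤ f a := by
        intro b hb
        exact hamax b ((hus.trans (Finset.erase_subset _ _)) hb)
      have husum' : (∑ b ∈ u, f b) ≤ m * f a := by
        calc (∑ b ∈ u, f b) ≤ ∑ _b ∈ u, f a := Finset.sum_le_sum hval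
          _ = m * f a := by rw [Finset.sum_const, hucard, smul_eq_mul]
      have hsplit : (∑ b ∈ s, f b) = f a + ∑ b ∈ s.erase a, f b :=
        (Finset.add_sum_erase _ _ has).symm
      have hc1 : 1 ≤ s.card := Finset.card_pos.mpr hne
      have hfact : s.card * (∑ b ∈ u, f b)
          = (s.card - 1) * (∑ b ∈ u, f b) + (∑ b ∈ u, f b) := by
        obtain ⟨c, hc⟩ := Nat.exists_eq_add_of_le hc1
        rw [hc]
        simp only [Nat.add_sub_cancel_left]
        ring
      rw [hfact, hsplit]
      rw [hcard] at husum
      calc (s.card - 1) * (∑ b ∈ u, f b) + (∑ b ∈ u, f b)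
          ≤ m * (∑ b ∈ s.erase a, f b) + m * f a := Nat.add_le_add husum husum'
        _ = m * (f a + ∑ b ∈ s.erase a, f b) := by ring

/-! ### The greedy path-building lemma -/

lemma exists_path_of_codegree (k : ℕ) {B : Finset V}
    (hB : ∀ u v, u ∈ B → v ∈ B → u ≠ v →
      2 * k + 2 ≤ (B.filter (fun w => G.Adj u w ∧ G.Adj v w)).card) :
    ∀ j, 1 ≤ j → ∀ (a b : V) (F : Finset V), a ∈ B → b ∈ B → a ≠ b →
    a ∉ F → b ∉ F → F.card + 2 * j ≤ 2 * k →
    ∃ p : G.Walk a b, p.IsPath ∧ p.length = 2 * j ∧ (∀ v ∈ p.support, v ∈ B) ∧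
      (∀ v ∈ p.support, v ∉ F) ∧ s(a, b) ∉ p.edges := by
  intro j
  induction j with
  | zero => omega
  | succ j ih =>
    intro _ a b F ha hb hab haF hbF hcard
    rcases Nat.eq_zero_or_pos j with hj0 | hj1
    · subst hj0
      have hpool : 2 * k + 2 ≤ (B.filter (fun w => G.Adj a w ∧ G.Adj b w)).card :=
        hB a b ha hb hab
      have hex : ((B.filter (fun w => G.Adj a w ∧ G.Adj b w)) \ (F ∪ {a, b})).Nonempty := by
        rw [← Finset.card_pos]
        have h1 := Finset.card_le_card_sdiff_add_card
          (s := (B.filter (fun w => G.Adj a w ∧ G.Adj b w))) (t := F ∪ {a, b})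
        have h2 : (F ∪ ({a, b} : Finset V)).card ≤ F.card + 2 := by
          refine le_trans (Finset.card_union_le _ _) ?_
          have := pair_card_le a b
          omega
        omega
      obtain ⟨m, hm⟩ := hex
      rw [Finset.mem_sdiff, Finset.mem_filter] at hm
      obtain ⟨⟨hmB, hadj_am, hadj_bm⟩, hmex⟩ := hm
      rw [Finset.mem_union] at hmex
      push_neg at hmex
      obtain ⟨hmF, hmab⟩ := hmex
      rw [Finset.mem_insert, Finset.mem_singleton] at hmab
      push_neg at hmab
      have hinner : (Walk.cons hadj_bm.symm (Walk.nil : G.Walk b b)).IsPath := by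
        rw [Walk.cons_isPath_iff]
        exact ⟨Walk.IsPath.nil, by simp [hmab.2]⟩
      have houter : (Walk.cons hadj_am (Walk.cons hadj_bm.symm Walk.nil)).IsPath := by
        rw [Walk.cons_isPath_iff]
        refine ⟨hinner, ?_⟩
        simp only [Walk.support_cons, Walk.support_nil, List.mem_cons, List.mem_singleton]
        push_neg
        refine ⟨hadj_am.ne, hab, by simp⟩
      refine ⟨Walk.cons hadj_am (Walk.cons hadj_bm.symm Walk.nil), houter, by simp, ?_, ?_, ?_⟩
      · intro v hv
        simp only [Walk.support_cons, Walk.support_nil, List.mem_cons, List.mem_singleton] at hv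
        rcases hv with rfl | rfl | rfl | h
        · exact ha
        · exact hmB
        · exact hb
        · simp at h
      · intro v hv
        simp only [Walk.support_cons, Walk.support_nil, List.mem_cons, List.mem_singleton] at hv
        rcases hv with rfl | rfl | rfl | h
        · exact haF
        · exact hmF
        · exact hbF
        · simp at h
      · intro hmem
        simp only [Walk.edges_cons, Walk.edges_nil, List.mem_cons, List.not_mem_nil,
          or_false] at hmem
        rcases hmem with h | h
        · rw [Sym2.eq_iff] at h
          rcases h with ⟨_, h2⟩ | ⟨h1, _⟩
          · exact hmab.2 h2.symm
          · exact hadj_am.ne h1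
        · rw [Sym2.eq_iff] at h
          rcases h with ⟨h1, _⟩ | ⟨h1, h2⟩
          · exact hmab.1 h1.symm
          · exact hab h1
    · have hpool1 : 2 * k + 2 ≤ (B.filter (fun w => G.Adj a w ∧ G.Adj b w)).card :=
        hB a b ha hb hab
      have hex1 : ((B.filter (fun w => G.Adj a w ∧ G.Adj b w)) \ (F ∪ {a, b})).Nonempty := by
        rw [← Finset.card_pos]
        have h1 := Finset.card_le_card_sdiff_add_card
          (s := (B.filter (fun w => G.Adj a w ∧ G.Adj b w))) (t := F ∪ {a, b})
        have h2 : (F ∪ ({a, b} : Finset V)).card ≤ F.card + 2 := by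
          refine le_trans (Finset.card_union_le _ _) ?_
          have := pair_card_le a b
          omega
        omega
      obtain ⟨b', hb'⟩ := hex1
      rw [Finset.mem_sdiff, Finset.mem_filter] at hb'
      obtain ⟨⟨hb'B, hadj_ab', hadj_bb'⟩, hb'ex⟩ := hb'
      rw [Finset.mem_union] at hb'ex
      push_neg at hb'ex
      obtain ⟨hb'F, hb'ab⟩ := hb'ex
      rw [Finset.mem_insert, Finset.mem_singleton] at hb'ab
      push_neg at hb'ab
      have hcard' : (insert b F).card + 2 * j ≤ 2 * k := by
        have := Finset.card_insert_le b F; omega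
      obtain ⟨p', hp'path, hp'len, hp'B, hp'F, hp'edge⟩ :=
        ih hj1 a b' (insert b F) ha hb'B (fun h => hb'ab.1 h.symm)
          (by rw [Finset.mem_insert]; push_neg; exact ⟨hab, haF⟩)
          (by rw [Finset.mem_insert]; push_neg; exact ⟨fun h => hb'ab.2 h, hb'F⟩) hcard'
      have hbp' : b ∉ p'.support := fun h => (hp'F b h) (Finset.mem_insert_self b F)
      have hpool2 : 2 * k + 2 ≤ (B.filter (fun w => G.Adj b' w ∧ G.Adj b w)).card :=
        hB b' b hb'B hb (fun h => hb'ab.2 h)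
      have hex2 : ((B.filter (fun w => G.Adj b' w ∧ G.Adj b w)) \
          (F ∪ p'.support.toFinset ∪ {b})).Nonempty := by
        rw [← Finset.card_pos]
        have h1 := Finset.card_le_card_sdiff_add_card
          (s := (B.filter (fun w => G.Adj b' w ∧ G.Adj b w)))
          (t := F ∪ p'.support.toFinset ∪ {b})
        have h2 : (F ∪ p'.support.toFinset ∪ ({b} : Finset V)).card
            ≤ F.card + (2 * j + 1) + 1 := by
          refine le_trans (Finset.card_union_le _ _) ?_
          have h3 := Finset.card_union_le F p'.support.toFinset
          have h4 : p'.support.toFinset.card ≤ 2 * j + 1 := by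
            refine le_trans p'.support.toFinset_card_le ?_
            rw [Walk.length_support, hp'len]
          simp only [Finset.card_singleton]
          omega
        omega
      obtain ⟨m, hm⟩ := hex2
      rw [Finset.mem_sdiff, Finset.mem_filter] at hm
      obtain ⟨⟨hmB, hadj_b'm, hadj_bm⟩, hmex⟩ := hm
      rw [Finset.mem_union, Finset.mem_union] at hmex
      push_neg at hmex
      obtain ⟨⟨hmF, hmsup⟩, hmb⟩ := hmex
      rw [Finset.mem_singleton] at hmb
      rw [List.mem_toFinset] at hmsup
      have hq1path : (p'.concat hadj_b'm).IsPath := isPath_concat hp'path hadj_b'm hmsup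
      have hbq1 : b ∉ (p'.concat hadj_b'm).support := by
        rw [Walk.support_concat, List.mem_append, List.mem_singleton]
        rintro (h | h)
        · exact hbp' h
        · exact hmb h.symm
      refine ⟨(p'.concat hadj_b'm).concat hadj_bm.symm,
        isPath_concat hq1path hadj_bm.symm hbq1, ?_, ?_, ?_, ?_⟩
      · simp [Walk.length_concat, hp'len]; ring
      · intro v hv
        rw [Walk.support_concat, List.mem_append,
          List.mem_singleton] at hv
        rcases hv with hv | rfl
        · rw [Walk.support_concat, List.mem_append,
            List.mem_singleton] at hv
          rcases hv with hv | rfl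
          · exact hp'B v hv
          · exact hmB
        · exact hb
      · intro v hv
        rw [Walk.support_concat, List.mem_append,
          List.mem_singleton] at hv
        rcases hv with hv | rfl
        · rw [Walk.support_concat, List.mem_append,
            List.mem_singleton] at hv
          rcases hv with hv | rfl
          · exact fun hvF => (hp'F v hv) (Finset.mem_insert_of_mem hvF)
          · exact hmF
        · exact hbF
      · intro hmem
        rw [Walk.edges_concat, List.concat_eq_append, List.mem_append,
          List.mem_singleton] at hmem
        rcases hmem with hmem | heq
        · rw [Walk.edges_concat, List.concat_eq_append, List.mem_append,
            List.mem_singleton] at hmem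
          rcases hmem with hmem | heq
          · exact hbp' (Walk.snd_mem_support_of_mem_edges p' hmem)
          · rw [Sym2.eq_iff] at heq
            rcases heq with ⟨h1, h2⟩ | ⟨h1, h2⟩
            · exact hb'ab.1 h1.symm
            · exact hb'ab.2 h2.symm
        · rw [Sym2.eq_iff] at heq
          rcases heq with ⟨h1, h2⟩ | ⟨h1, h2⟩
          · exact hmsup (h1 ▸ p'.start_mem_support)
          · exact hab h1

/-! ### Arithmetic lemmas -/

lemma arith_C1 {r k n : ℕ} (hr : 1 ≤ r) (hk : 3 ≤ k) (hrk : r + 4 ≤ 2 * k)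
    (hn : 20 * (r + 2) ^ 2 * k ≤ n) :
    (n - (8 * k + 1)) ^ 2 + (4 * k + 4) * (n - (8 * k + 1)) + 8 * k * n + 3
      ≤ (n - r + 1) ^ 2 := by
  have h9 : 9 ≤ (r + 2) ^ 2 := by nlinarith
  have h180 : 180 * k ≤ n := by nlinarith
  have hrn : r ≤ n := by nlinarith
  have h8k : 8 * k + 1 ≤ n := by nlinarith
  zify [hrn, h8k]
  have hrk' : (r : ℤ) + 4 ≤ 2 * k := by exact_mod_cast hrk
  have hr' : (1 : ℤ) ≤ r := by exact_mod_cast hr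
  have hk' : (3 : ℤ) ≤ k := by exact_mod_cast hk
  have h180' : (180 : ℤ) * k ≤ n := by exact_mod_cast h180
  have hn' : (20 : ℤ) * (r + 2) ^ 2 * k ≤ n := by exact_mod_cast hn
  rcases le_or_gt (r : ℤ) (k : ℤ) with hcase | hcase
  · nlinarith [sq_nonneg ((r : ℤ) - 1),
      mul_le_mul_of_nonneg_right h180' (by positivity : (0:ℤ) ≤ k),
      mul_le_mul_of_nonneg_left h180' (by linarith : (0:ℤ) ≤ 2 * k - 2 * r)]
  · have hkr : (0 : ℤ) ≤ 2 * k - r - 4 := by linarith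
    nlinarith [sq_nonneg ((r : ℤ) - 1),
      mul_le_mul_of_nonneg_left hn' (by linarith : (0:ℤ) ≤ (8:ℤ)),
      sq_nonneg ((r : ℤ) + 2), mul_pos (by linarith : (0:ℤ) < (r:ℤ))
        (by linarith : (0:ℤ) < (k:ℤ))]

lemma arith_C2a {r k n : ℕ} (hr : 1 ≤ r) (hk : 3 ≤ k) (hrk : r + 4 ≤ 2 * k)
    (hn : 20 * (r + 2) ^ 2 * k ≤ n) :
    5 * (n - (8 * k + 1)) ^ 2 + (20 * k + 20) * (n - (8 * k + 1)) + (39 * k + 40) * n + 25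
      ≤ 5 * (n - r + 1) ^ 2 := by
  have h9 : 9 ≤ (r + 2) ^ 2 := by nlinarith
  have h180 : 180 * k ≤ n := by nlinarith
  have hrn : r ≤ n := by nlinarith
  have h8k : 8 * k + 1 ≤ n := by nlinarith
  zify [hrn, h8k]
  have hrk' : (r : ℤ) + 4 ≤ 2 * k := by exact_mod_cast hrk
  have hr' : (1 : ℤ) ≤ r := by exact_mod_cast hr
  have hk' : (3 : ℤ) ≤ k := by exact_mod_cast hk
  have h180' : (180 : ℤ) * k ≤ n := by exact_mod_cast h180
  have hcoeff : (k : ℤ) ≤ 21 * k - 10 * r - 40 := by linarith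
  nlinarith [sq_nonneg ((r : ℤ) - 1),
    mul_le_mul_of_nonneg_right h180' (by positivity : (0:ℤ) ≤ k)]

lemma arith_C2b {k n Y : ℕ} (hk : 3 ≤ k) (hn : 180 * k ≤ n) (hnpos : 0 < n)
    (hY : (39 * k + 40) * n + 15 ≤ Y)
    (hYsq : (2 * k - 1) * Y ^ 2 ≤ 8000 * k ^ 2 * n * (8 * k + 1) ^ 2) : False := by
  have s1 : ((39 * k + 40) * n) ^ 2 ≤ Y ^ 2 := Nat.pow_le_pow_left (by omega) 2
  have s2 : (2 * k - 1) * ((39 * k + 40) * n) ^ 2 ≤ 8000 * k ^ 2 * n * (8 * k + 1) ^ 2 :=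
    le_trans (Nat.mul_le_mul_left _ s1) hYsq
  have s3 : n * ((2 * k - 1) * ((39 * k + 40)) ^ 2 * n)
      ≤ n * (8000 * k ^ 2 * (8 * k + 1) ^ 2) := by
    calc n * ((2 * k - 1) * ((39 * k + 40)) ^ 2 * n)
        = (2 * k - 1) * ((39 * k + 40) * n) ^ 2 := by ring
      _ ≤ 8000 * k ^ 2 * n * (8 * k + 1) ^ 2 := s2
      _ = n * (8000 * k ^ 2 * (8 * k + 1) ^ 2) := by ring
  have s4 : (2 * k - 1) * (39 * k + 40) ^ 2 * n ≤ 8000 * k ^ 2 * (8 * k + 1) ^ 2 :=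
    Nat.le_of_mul_le_mul_left s3 hnpos
  have s5 : (2 * k - 1) * (39 * k + 40) ^ 2 * (180 * k) ≤ 8000 * k ^ 2 * (8 * k + 1) ^ 2 :=
    le_trans (Nat.mul_le_mul_left _ hn) s4
  obtain ⟨j, rfl⟩ : ∃ j, k = j + 1 := ⟨k - 1, by omega⟩
  have e1 : 2 * (j + 1) - 1 = 2 * j + 1 := by omega
  rw [e1] at s5
  nlinarith [s5, sq_nonneg j, Nat.zero_le j]

end CommonNbrsAux

namespace CommonNbrsAux

open SimpleGraph Finset

variable {V : Type*} [Fintype V] [DecidableEq V] {G : SimpleGraph V} [DecidableRel G.Adj]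

lemma ncard_eq_filter_card {x y : V} (P : G.Walk x y) :
    ((G.neighborSet x ∩ G.neighborSet y) \ {v | v ∈ P.support}).ncard
      = (Finset.univ.filter (fun v => G.Adj x v ∧ G.Adj y v ∧ v ∉ P.support)).card := by
  rw [← Set.ncard_coe_finset]
  congr 1
  ext v
  simp only [Finset.coe_filter, Finset.mem_univ, true_and, Set.mem_setOf_eq,
    Set.mem_diff, Set.mem_inter_iff, SimpleGraph.mem_neighborSet]
  tauto

/-- The main inductive lemma. -/
lemma aux (r k n : ℕ) (hr : 1 ≤ r) (hk : 3 ≤ k) (hrk : r + 4 ≤ 2 * k)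
    (hn : 20 * (r + 2) ^ 2 * k ≤ n)
    (G : SimpleGraph (Fin n)) [DecidableRel G.Adj] (hfree : CycleFree (2 * k + 1) G)
    (he4 : (n - r + 1) ^ 2 ≤ 4 * G.edgeFinset.card + 3) :
    ∀ (i : ℕ) (x y : Fin n) (P : G.Walk x y), P.IsPath → P.length + 1 + 2 * i = 2 * k →
    ((G.neighborSet x ∩ G.neighborSet y) \ {v | v ∈ P.support}).ncard ≤ 8 * k := by
  have h9 : 9 ≤ (r + 2) ^ 2 := by nlinarith
  have h180 : 180 * k ≤ n := by nlinarith
  intro i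
  induction i with
  | zero =>
    intro x y P hP heq
    by_contra hcon
    push_neg at hcon
    rw [ncard_eq_filter_card] at hcon
    have hne : (Finset.univ.filter
        (fun v => G.Adj x v ∧ G.Adj y v ∧ v ∉ P.support)).Nonempty := by
      rw [← Finset.card_pos]; omega
    obtain ⟨w, hw⟩ := hne
    rw [Finset.mem_filter] at hw
    obtain ⟨_, hxw, hyw, hwP⟩ := hw
    have hpos : 0 < P.length := by omega
    obtain ⟨c, hcyc, hclen⟩ := cycle_of_common_nbr P hP hpos hxw hyw hwP
    exact hfree w c hcyc (by omega)
  | succ i ih =>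
    intro x y P hP heq
    by_contra hcon
    push_neg at hcon
    rw [ncard_eq_filter_card] at hcon
    set W := Finset.univ.filter (fun v => G.Adj x v ∧ G.Adj y v ∧ v ∉ P.support) with hWdef
    have hmemW : ∀ w ∈ W, G.Adj x w ∧ G.Adj y w ∧ w ∉ P.support := by
      intro w hw
      rw [hWdef, Finset.mem_filter] at hw
      exact hw.2
    -- codegree bound from the inductive hypothesis
    set Q := 8 * k + (P.length + 3) with hQdef
    have hQbound : ∀ w1 ∈ W, ∀ w2 ∈ W, w1 ≠ w2 → cod G w1 w2 ≤ Q := by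
      intro w1 hw1 w2 hw2 hne
      obtain ⟨hxw1, hyw1, hw1P⟩ := hmemW w1 hw1
      obtain ⟨hxw2, hyw2, hw2P⟩ := hmemW w2 hw2
      have hcpath : (P.concat hyw2).IsPath := isPath_concat hP hyw2 hw2P
      have hw1c : w1 ∉ (P.concat hyw2).support := by
        rw [Walk.support_concat, List.mem_append, List.mem_singleton]
        rintro (h | h)
        · exact hw1P h
        · exact hne h
      have hP' : (Walk.cons hxw1.symm (P.concat hyw2)).IsPath := by
        rw [Walk.cons_isPath_iff]; exact ⟨hcpath, hw1c⟩
      set P' := Walk.cons hxw1.symm (P.concat hyw2) with hP'def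
      have hlen' : P'.length = P.length + 2 := by
        rw [hP'def, Walk.length_cons, Walk.length_concat]
      have hih := ih w1 w2 P' hP' (by omega)
      rw [ncard_eq_filter_card] at hih
      have hsub : Finset.univ.filter (fun v => G.Adj w1 v ∧ G.Adj w2 v)
          ⊆ (Finset.univ.filter (fun v => G.Adj w1 v ∧ G.Adj w2 v ∧ v ∉ P'.support))
            ∪ P'.support.toFinset := by
        intro v hv
        rw [Finset.mem_filter] at hv
        by_cases hvP : v ∈ P'.support
        · exact Finset.mem_union_right _ (List.mem_toFinset.mpr hvP)
        · exact Finset.mem_union_left _ (Finset.mem_filter.mpr ⟨hv.1, hv.2.1, hv.2.2, hvP⟩)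
      have hsupcard : P'.support.toFinset.card ≤ P.length + 3 := by
        refine le_trans (P'.support.toFinset_card_le) ?_
        rw [Walk.length_support, hlen']
      have hcod : cod G w1 w2
          ≤ (Finset.univ.filter
              (fun v => G.Adj w1 v ∧ G.Adj w2 v ∧ v ∉ P'.support)).card
            + P'.support.toFinset.card := by
        refine le_trans (Finset.card_le_card hsub) (Finset.card_union_le _ _)
      omega
    have hQ10 : Q ≤ 10 * k := by omega
    -- counting
    set t := W.card with htdef
    set D := ∑ w ∈ W, dS G Finset.univ w with hDdef
    have hD2 : D ^ 2 ≤ n * (D + Q * t * t) := by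
      have := deg_sum_sq_bound (G := G) hQbound
      rwa [Fintype.card_fin] at this
    obtain ⟨W'', hsub'', hcard'', hsum''⟩ :=
      exists_small_subset (dS G Finset.univ) W (8 * k + 1) (by omega)
    set D'' := ∑ w ∈ W'', dS G Finset.univ w with hD''def
    set A0 := Finset.univ \ W'' with hA0def
    have hA0card : A0.card = n - (8 * k + 1) := by
      rw [hA0def, Finset.card_sdiff_of_subset (Finset.subset_univ _), hcard'', Finset.card_univ,
        Fintype.card_fin]
    have hSSd : SS G Finset.univ ≤ SS G A0 + 2 * D'' := SS_sdiff W''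
    have hSSu : SS G Finset.univ = 2 * G.edgeFinset.card := SS_univ_eq
    have hstar : (n - (8 * k + 1)) ^ 2 + (4 * k + 4) * (n - (8 * k + 1)) + 4 * D'' + 3
        ≤ (n - r + 1) ^ 2 := by
      rcases le_or_gt D (2 * k * n) with hcase | hcase
      · -- low total degree case
        have h4D : 4 * D'' ≤ 8 * k * n := by
          have h1 : t * (4 * D'') ≤ t * (8 * k * n) := by
            calc t * (4 * D'') = 4 * (t * D'') := by ring
              _ ≤ 4 * ((8 * k + 1) * D) := Nat.mul_le_mul_left 4 hsum''
              _ ≤ 4 * ((8 * k + 1) * (2 * k * n)) :=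
                  Nat.mul_le_mul_left 4 (Nat.mul_le_mul_left _ hcase)
              _ = (8 * k + 1) * (8 * k * n) := by ring
              _ ≤ t * (8 * k * n) := Nat.mul_le_mul_right _ (by omega)
          exact Nat.le_of_mul_le_mul_left h1 (by omega)
        have hC1 := arith_C1 hr hk hrk hn
        omega
      · -- high total degree case
        by_contra hfail
        push_neg at hfail
        have hC2a := arith_C2a hr hk hrk hn
        have hmul : (20 * k + 20) * (n - (8 * k + 1))
            = 5 * ((4 * k + 4) * (n - (8 * k + 1))) := by ring
        have hY : (39 * k + 40) * n + 15 ≤ 20 * D'' := by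
          linarith [hfail, hC2a, hmul]
        have hDD : (2 * k - 1) * D ^ 2 ≤ 2 * k * n * Q * (t * t) := by
          have h1 : 2 * k * D ^ 2 ≤ 2 * k * (n * D) + 2 * k * n * Q * (t * t) := by
            have := Nat.mul_le_mul_left (2 * k) hD2
            calc 2 * k * D ^ 2 ≤ 2 * k * (n * (D + Q * t * t)) := this
              _ = 2 * k * (n * D) + 2 * k * n * Q * (t * t) := by ring
          have h2 : 2 * k * (n * D) ≤ D ^ 2 := by
            calc 2 * k * (n * D) = (2 * k * n) * D := by ring
              _ ≤ D * D := Nat.mul_le_mul_right D (le_of_lt hcase)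
              _ = D ^ 2 := (sq D).symm
          have h3 : (2 * k - 1) * D ^ 2 + D ^ 2 = 2 * k * D ^ 2 := by
            have hke : 2 * k - 1 + 1 = 2 * k := by omega
            calc (2 * k - 1) * D ^ 2 + D ^ 2 = (2 * k - 1 + 1) * D ^ 2 := by ring
              _ = 2 * k * D ^ 2 := by rw [hke]
          omega
        have htpos : 0 < t := by omega
        have hYsq : (2 * k - 1) * (20 * D'') ^ 2 ≤ 8000 * k ^ 2 * n * (8 * k + 1) ^ 2 := by
          have hq1 : t * (20 * D'') ≤ 20 * ((8 * k + 1) * D) := by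
            calc t * (20 * D'') = 20 * (t * D'') := by ring
              _ ≤ 20 * ((8 * k + 1) * D) := Nat.mul_le_mul_left 20 hsum''
          have hq2 : (t * (20 * D'')) ^ 2 ≤ (20 * ((8 * k + 1) * D)) ^ 2 :=
            Nat.pow_le_pow_left hq1 2
          have hq3 : (t * t) * ((2 * k - 1) * (20 * D'') ^ 2)
              ≤ (t * t) * (8000 * k ^ 2 * n * (8 * k + 1) ^ 2) := by
            calc (t * t) * ((2 * k - 1) * (20 * D'') ^ 2)
                = (2 * k - 1) * (t * (20 * D'')) ^ 2 := by ring
              _ ≤ (2 * k - 1) * (20 * ((8 * k + 1) * D)) ^ 2 := Nat.mul_le_mul_left _ hq2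
              _ = 400 * (8 * k + 1) ^ 2 * ((2 * k - 1) * D ^ 2) := by ring
              _ ≤ 400 * (8 * k + 1) ^ 2 * (2 * k * n * Q * (t * t)) :=
                  Nat.mul_le_mul_left _ hDD
              _ ≤ 400 * (8 * k + 1) ^ 2 * (2 * k * n * (10 * k) * (t * t)) := by
                  have : 2 * k * n * Q * (t * t) ≤ 2 * k * n * (10 * k) * (t * t) :=
                    Nat.mul_le_mul_right _ (Nat.mul_le_mul_left _ hQ10)
                  exact Nat.mul_le_mul_left _ this
              _ = (t * t) * (8000 * k ^ 2 * n * (8 * k + 1) ^ 2) := by ring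
          have := Nat.le_of_mul_le_mul_left hq3 (by positivity)
          exact this
        exact arith_C2b hk h180 (by omega) hY hYsq
    have hInv : A0.card ^ 2 + (4 * k + 4) * A0.card ≤ 2 * SS G A0 := by
      rw [hA0card]
      linarith [hstar, hSSd, hSSu, he4]
    have hA0ne : A0.Nonempty := by
      rw [← Finset.card_pos, hA0card]; omega
    obtain ⟨B, hBsub, hBne, hBdeg⟩ := cleaning k A0.card A0 rfl hInv hA0ne
    obtain ⟨u1, hu1B⟩ := hBne
    have hd1 := hBdeg u1 hu1B
    have hu0ex : (B.filter (fun u => G.Adj u1 u)).Nonempty := by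
      rw [← Finset.card_pos]
      have : 0 < dS G B u1 := by omega
      exact this
    obtain ⟨u0, hu0⟩ := hu0ex
    rw [Finset.mem_filter] at hu0
    obtain ⟨hu0B, hadj10⟩ := hu0
    obtain ⟨p, hppath, hplen, _, _, hpedge⟩ :=
      exists_path_of_codegree k (codegree_of_min_degree hBdeg) k (by omega) u1 u0 ∅
        hu1B hu0B hadj10.ne (by simp) (by simp) (by simp)
    have hcyc : (Walk.cons hadj10.symm p).IsCycle := by
      rw [Walk.cons_isCycle_iff]
      refine ⟨hppath, ?_⟩
      rw [Sym2.eq_swap]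
      exact hpedge
    exact hfree u0 (Walk.cons hadj10.symm p) hcyc (by simp [hplen])

end CommonNbrsAux

/-- Lemma 2.2: let `r, k, n` be positive integers with `2k ≥ r + 4`, `n ≥ 20(r+2)²k`, and
let `G` be a `C_{2k+1}`-free graph on `n` vertices with `e(G) ≥ ⌊(n-r+1)²/4⌋ + C(r,2)`.
Then for every path `P_{xy}` in `G` of even order at most `2k`,
`|(N(x) ∩ N(y)) \ V(P_{xy})| ≤ 8k`. -/
theorem common_nbrs_of_even_path_le (r k n : ℕ) (hr : 1 ≤ r) (hk : 1 ≤ k)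
    (hrk : r + 4 ≤ 2 * k) (hn : 20 * (r + 2) ^ 2 * k ≤ n)
    (G : SimpleGraph (Fin n)) (hfree : CycleFree (2 * k + 1) G)
    (he : (n - r + 1) ^ 2 / 4 + r.choose 2 ≤ G.edgeSet.ncard)
    (x y : Fin n) (P : G.Walk x y) (hP : P.IsPath)
    (heven : Even (P.length + 1)) (hord : P.length + 1 ≤ 2 * k) :
    ((G.neighborSet x ∩ G.neighborSet y) \ {v | v ∈ P.support}).ncard ≤ 8 * k := by
  classical
  have hk3 : 3 ≤ k := by omega
  have he4 : (n - r + 1) ^ 2 ≤ 4 * G.edgeFinset.card + 3 := by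
    have h1 := CommonNbrsAux.edge_ncard_eq (G := G)
    rw [h1] at he
    omega
  obtain ⟨c, hc⟩ := heven
  have hck : c ≤ k := by omega
  exact CommonNbrsAux.aux r k n hr hk3 hrk hn G hfree he4 (k - c) x y P hP (by omega)
end

section
/- Let m ≥ 2 and let C be an odd cycle of length 2m+1 in a graph G such that G contains no odd cycle of length strictly smaller than 2m+1. Then every vertex v ∈ V(G)\V(C) has at most 2 neighbors on C, i.e., |N(v) ∩ V(C)| ≤ 2. -/
open SimpleGraph Walk

section Aux

variable {V : Type*} {G : SimpleGraph V} [DecidableEq V]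

lemma takeUntil_start {a b : V} (p : G.Walk a b) (h : a ∈ p.support) :
    p.takeUntil a h = Walk.nil := by
  cases p with
  | nil => rfl
  | cons r p => simp [Walk.takeUntil]

lemma takeUntil_cons' {a b c u : V} (r : G.Adj a b) (p : G.Walk b c)
    (h : u ∈ (Walk.cons r p).support) (hne : a ≠ u) (hu : u ∈ p.support) :
    (Walk.cons r p).takeUntil u h = Walk.cons r (p.takeUntil u hu) := by
  simp [Walk.takeUntil, hne]

lemma dropUntil_cons' {a b c u : V} (r : G.Adj a b) (p : G.Walk b c)
    (h : u ∈ (Walk.cons r p).support) (hne : a ≠ u) (hu : u ∈ p.support) :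
    (Walk.cons r p).dropUntil u h = p.dropUntil u hu := by
  simp [Walk.dropUntil, hne]

lemma takeUntil_eq_of_eq {a b u : V} (p q : G.Walk a b) (h : p = q)
    (hu : u ∈ p.support) (hu' : u ∈ q.support) :
    p.takeUntil u hu = q.takeUntil u hu' := by subst h; rfl

lemma takeUntil_append_left {a b c u : V} (p : G.Walk a b) (q : G.Walk b c)
    (hu : u ∈ p.support) (h : u ∈ (p.append q).support) :
    (p.append q).takeUntil u h = p.takeUntil u hu := by
  induction p with
  | nil =>
    have he := (Walk.mem_support_nil_iff).mp hu
    subst he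
    rw [takeUntil_start, takeUntil_start]
  | cons r p ih =>
    rename_i a' b' w'
    by_cases hau : a' = u
    · subst hau
      rw [takeUntil_start, takeUntil_start]
    · have hu' : u ∈ p.support := by
        rcases (by simpa using hu : u = a' ∨ u ∈ p.support) with h1 | h1
        · exact absurd h1.symm hau
        · exact h1
      have h2 : u ∈ (p.append q).support := (Walk.mem_support_append_iff _ _).mpr (Or.inl hu')
      show (Walk.cons r (p.append q)).takeUntil u h = _
      rw [takeUntil_cons' r (p.append q) (by simp; exact Or.inr (by simpa using h2)) hau h2,
        takeUntil_cons' r p hu hau hu', ih q hu' h2]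

lemma takeUntil_append_right {a b c u : V} (p : G.Walk a b) (q : G.Walk b c)
    (hp : u ∉ p.support) (hq : u ∈ q.support) (h : u ∈ (p.append q).support) :
    (p.append q).takeUntil u h = p.append (q.takeUntil u hq) := by
  induction p with
  | nil => rfl
  | cons r p ih =>
    rename_i a' b' w'
    have hau : a' ≠ u := fun e => hp (by simp [e])
    have hp' : u ∉ p.support := fun e => hp (by simp [e])
    have h2 : u ∈ (p.append q).support := (Walk.mem_support_append_iff _ _).mpr (Or.inr hq)
    show (Walk.cons r (p.append q)).takeUntil u h = _
    rw [takeUntil_cons' r (p.append q) (by simp; exact Or.inr (by simpa using h2)) hau h2, ih q hp' hq h2]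
    rfl

lemma isPath_takeUntil_of_isCycle {x y : V} {c : G.Walk x x} (hc : c.IsCycle)
    (h : y ∈ c.support) (hne : y ≠ x) :
    (c.takeUntil y h).IsPath ∧ (c.dropUntil y h).IsPath := by
  cases c with
  | nil => exact absurd (Walk.mem_support_nil_iff.mp h) hne
  | cons r p =>
    rw [Walk.cons_isCycle_iff] at hc
    obtain ⟨hp, -⟩ := hc
    have hyp : y ∈ p.support := by
      rcases (by simpa using h : y = x ∨ y ∈ p.support) with h1 | h1
      · exact absurd h1 hne
      · exact h1
    have hxne : x ≠ y := fun e => hne e.symm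
    constructor
    · rw [takeUntil_cons' r p h hxne hyp]
      refine (hp.takeUntil hyp).cons ?_
      intro hxmem
      -- x appears in the dropUntil part, so nodup of p.support is violated
      have hnodup := hp.support_nodup
      have hsplit := p.take_spec hyp
      have : p.support = (p.takeUntil y hyp).support ++ (p.dropUntil y hyp).support.tail := by
        rw [← Walk.support_append, hsplit]
      rw [this] at hnodup
      have hdisj := List.disjoint_of_nodup_append hnodup
      have hxdrop : x ∈ (p.dropUntil y hyp).support.tail := by
        have hxd : x ∈ (p.dropUntil y hyp).support := Walk.end_mem_support _
        rw [Walk.support_eq_cons] at hxd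
        rcases List.mem_cons.mp hxd with h1 | h1
        · exact absurd h1 hne.symm
        · exact h1
      exact hdisj hxmem hxdrop
    · rw [dropUntil_cons' r p h hxne hyp]
      exact hp.dropUntil hyp

lemma odd_path_bound {m : ℕ}
    (hmin : ∀ (u : V) (d : G.Walk u u), d.IsCycle → Odd d.length → 2 * m + 1 ≤ d.length)
    {x y v : V} (p : G.Walk x y) (hp : p.IsPath) (hxy : x ≠ y) (hv : v ∉ p.support)
    (hvx : G.Adj v x) (hvy : G.Adj v y) (hodd : Odd p.length) :
    2 * m + 1 ≤ p.length + 2 := by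
  have hq : (p.concat hvy.symm).IsPath := by
    rw [Walk.isPath_def, Walk.support_concat]
    rw [List.nodup_append']
    exact ⟨hp.support_nodup, List.nodup_singleton v, by simpa using hv⟩
  have hcyc : (Walk.cons hvx (p.concat hvy.symm)).IsCycle := by
    rw [Walk.cons_isCycle_iff]
    refine ⟨hq, ?_⟩
    rw [Walk.edges_concat]
    simp only [List.concat_eq_append, List.mem_append, List.mem_singleton]
    rintro (hmem | heq)
    · exact hv (Walk.fst_mem_support_of_mem_edges p hmem)
    · rw [Sym2.eq_iff] at heq
      rcases heq with ⟨h1, h2⟩ | ⟨h1, h2⟩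
      · exact hvy.ne h1
      · exact hxy h2
  have := hmin v _ hcyc (by
    rw [Walk.length_cons, Walk.length_concat]
    obtain ⟨k, hk⟩ := hodd
    exact ⟨k + 1, by omega⟩)
  rw [Walk.length_cons, Walk.length_concat] at this
  omega

lemma arc_length_eq {m : ℕ} (hm : 2 ≤ m)
    (hmin : ∀ (u : V) (d : G.Walk u u), d.IsCycle → Odd d.length → 2 * m + 1 ≤ d.length)
    {x y v : V} (p : G.Walk x y) (q : G.Walk y x) (hp : p.IsPath) (hq : q.IsPath)
    (hxy : x ≠ y) (hv : v ∉ p.support) (hv' : v ∉ q.support)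
    (hvx : G.Adj v x) (hvy : G.Adj v y)
    (hsum : p.length + q.length = 2 * m + 1) :
    p.length = 2 ∨ p.length = 2 * m - 1 := by
  have hp1 : 1 ≤ p.length := by
    rcases Nat.eq_zero_or_pos p.length with h0 | h0
    · exact absurd (Walk.eq_of_length_eq_zero h0) hxy
    · omega
  have hq1 : 1 ≤ q.length := by
    rcases Nat.eq_zero_or_pos q.length with h0 | h0
    · exact absurd (Walk.eq_of_length_eq_zero h0) hxy.symm
    · omega
  rcases Nat.even_or_odd p.length with he | ho
  · obtain ⟨k, hk⟩ := he
    have hoq : Odd q.length := ⟨m - k, by omega⟩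
    have := odd_path_bound hmin q hq hxy.symm hv' hvy hvx hoq
    omega
  · have := odd_path_bound hmin p hp hxy hv hvx hvy ho
    obtain ⟨k, hk⟩ := ho
    omega

lemma key_three {m : ℕ} (hm : 2 ≤ m)
    (hmin : ∀ (u : V) (d : G.Walk u u), d.IsCycle → Odd d.length → 2 * m + 1 ≤ d.length)
    {a v : V} (d : G.Walk a a) (hd : d.IsCycle) (hdlen : d.length = 2 * m + 1)
    (hvd : v ∉ d.support) (hva : G.Adj v a)
    {b c' : V} (hb : b ∈ d.support) (hvb : G.Adj v b) (hba : b ≠ a)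
    (hc' : c' ∈ d.support) (hvc : G.Adj v c') (hca : c' ≠ a) (hbc : b ≠ c')
    (hlt : (d.takeUntil b hb).length < (d.takeUntil c' hc').length) : False := by
  obtain ⟨hP, hQ⟩ := isPath_takeUntil_of_isCycle hd hb hba
  obtain ⟨hP', hQ'⟩ := isPath_takeUntil_of_isCycle hd hc' hca
  set P := d.takeUntil b hb with hPdef
  set Q := d.dropUntil b hb with hQdef
  have hPQ : P.append Q = d := d.take_spec hb
  have hsum : P.length + Q.length = 2 * m + 1 := by
    have := congrArg Walk.length hPQ
    rw [Walk.length_append] at this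
    omega
  have hsum' : (d.takeUntil c' hc').length + (d.dropUntil c' hc').length = 2 * m + 1 := by
    have := congrArg Walk.length (d.take_spec hc')
    rw [Walk.length_append] at this
    omega
  have hvP : v ∉ P.support := fun h => hvd (Walk.support_takeUntil_subset d hb h)
  have hvQ : v ∉ Q.support := fun h => hvd (Walk.support_dropUntil_subset d hb h)
  have hvP' : v ∉ (d.takeUntil c' hc').support :=
    fun h => hvd (Walk.support_takeUntil_subset d hc' h)
  have hvQ' : v ∉ (d.dropUntil c' hc').support :=
    fun h => hvd (Walk.support_dropUntil_subset d hc' h)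
  have hi := arc_length_eq hm hmin P Q hP hQ hba.symm hvP hvQ hva hvb hsum
  have hj := arc_length_eq hm hmin (d.takeUntil c' hc') (d.dropUntil c' hc') hP' hQ'
    hca.symm hvP' hvQ' hva hvc hsum'
  have hcP : c' ∉ P.support := by
    intro hmem
    have e := takeUntil_eq_of_eq d (P.append Q) hPQ.symm hc'
      ((Walk.mem_support_append_iff _ _).mpr (Or.inl hmem))
    rw [takeUntil_append_left P Q hmem _] at e
    have hle : (d.takeUntil c' hc').length ≤ P.length := by
      rw [e]; exact Walk.length_takeUntil_le P hmem
    omega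
  have hcQ : c' ∈ Q.support := by
    have h2 : c' ∈ (P.append Q).support := by rw [hPQ]; exact hc'
    rcases (Walk.mem_support_append_iff _ _).mp h2 with h1 | h1
    · exact absurd h1 hcP
    · exact h1
  have e2 := takeUntil_eq_of_eq d (P.append Q) hPQ.symm hc'
    ((Walk.mem_support_append_iff _ _).mpr (Or.inr hcQ))
  rw [takeUntil_append_right P Q hcP hcQ _] at e2
  have hk : (d.takeUntil c' hc').length = P.length + (Q.takeUntil c' hcQ).length := by
    have := congrArg Walk.length e2
    rwa [Walk.length_append] at this
  have hklen : (Q.takeUntil c' hcQ).length = 2 * m - 3 := by omega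
  have hbound := odd_path_bound hmin (Q.takeUntil c' hcQ) (hQ.takeUntil hcQ) hbc
    (fun h => hvQ (Walk.support_takeUntil_subset Q hcQ h)) hvb hvc
    (by rw [hklen]; exact ⟨m - 2, by omega⟩)
  omega

lemma closed_mem_support_iff {x : V} (d : G.Walk x x) (hd : ¬d.Nil) (u : V) :
    u ∈ d.support ↔ u ∈ d.support.tail := by
  cases d with
  | nil => simp at hd
  | cons r p =>
    have hx : x ∈ (Walk.cons r p).support.tail := by
      simpa using Walk.end_mem_support p
    rw [Walk.support_eq_cons, List.mem_cons]
    exact ⟨fun h => h.elim (fun e => e ▸ hx) id, Or.inr⟩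

end Aux

/-- Claim 2.5: let `m ≥ 2` and let `C` be an odd cycle of length `2m + 1` in a graph `G`
containing no odd cycle of length strictly smaller than `2m + 1`.  Then every vertex
`v ∉ V(C)` has at most two neighbours on `C`. -/
theorem nbrs_on_shortest_odd_cycle_le_two {V : Type*} (G : SimpleGraph V) (m : ℕ)
    (hm : 2 ≤ m) (w : V) (c : G.Walk w w) (hc : c.IsCycle) (hlen : c.length = 2 * m + 1)
    (hmin : ∀ (u : V) (d : G.Walk u u), d.IsCycle → Odd d.length → 2 * m + 1 ≤ d.length)
    (v : V) (hv : v ∉ c.support) :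
    {u | u ∈ c.support ∧ G.Adj v u}.ncard ≤ 2 := by
  classical
  by_contra hcard
  push_neg at hcard
  set S := {u | u ∈ c.support ∧ G.Adj v u} with hS
  have hfin : S.Finite := (c.support.toFinset.finite_toSet).subset
    (fun u hu => by simpa using hu.1)
  rw [Set.ncard_eq_toFinset_card S hfin] at hcard
  obtain ⟨a, b, c₃, ha, hb, hc₃, hab, hac, hbc⟩ := Finset.two_lt_card_iff.mp hcard
  rw [Set.Finite.mem_toFinset] at ha hb hc₃
  obtain ⟨haS, hva⟩ := ha
  obtain ⟨hbS, hvb⟩ := hb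
  obtain ⟨hcS, hvc⟩ := hc₃
  -- rotate the cycle to start at a
  set d := c.rotate a haS with hd
  have hdc : d.IsCycle := hc.rotate haS
  have hdlen : d.length = 2 * m + 1 := by
    have h1 := congrArg Walk.length (c.take_spec haS)
    rw [Walk.length_append] at h1
    rw [hd, Walk.rotate, Walk.length_append]
    omega
  have hdn : ¬d.Nil := Walk.not_nil_iff_lt_length.mpr (by omega)
  have hcn : ¬c.Nil := Walk.not_nil_iff_lt_length.mpr (by omega)
  have hmem : ∀ u, u ∈ d.support ↔ u ∈ c.support := by
    intro u
    rw [closed_mem_support_iff d hdn u, closed_mem_support_iff c hcn u]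
    exact (Walk.support_rotate c a haS).perm.mem_iff
  have hvd : v ∉ d.support := fun h => hv ((hmem v).mp h)
  have hbd : b ∈ d.support := (hmem b).mpr hbS
  have hcd : c₃ ∈ d.support := (hmem c₃).mpr hcS
  -- the vertex at position (takeUntil u).length is u
  have hgv : ∀ (u : V) (hu : u ∈ d.support),
      d.getVert (d.takeUntil u hu).length = u := by
    intro u hu
    have h2 := d.take_spec hu
    have h3 := Walk.getVert_append (d.takeUntil u hu) (d.dropUntil u hu)
      (d.takeUntil u hu).length
    rw [h2] at h3
    rw [h3, if_neg (lt_irrefl _), Nat.sub_self, Walk.getVert_zero]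
  have hne : (d.takeUntil b hbd).length ≠ (d.takeUntil c₃ hcd).length := by
    intro he
    apply hbc
    rw [← hgv b hbd, ← hgv c₃ hcd, he]
  rcases Nat.lt_or_ge (d.takeUntil b hbd).length (d.takeUntil c₃ hcd).length with hlt | hge
  · exact key_three hm hmin d hdc hdlen hvd hva hbd hvb (fun e => hab e.symm)
      hcd hvc (fun e => hac e.symm) hbc hlt
  · exact key_three hm hmin d hdc hdlen hvd hva hcd hvc (fun e => hac e.symm)
      hbd hvb (fun e => hab e.symm) (fun e => hbc e.symm) (by omega)
end
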